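/- Let A be an m×t real matrix with rows a_1, …, a_m ∈ ℝ^t and let γ ∈ (0,1). Then there exist nonnegative reals w_1, …, w_m, at most ⌈t/γ²⌉ of which are nonzero, such that for every v ∈ ℝ^t: (1−γ)·‖Av‖₂ ≤ (Σ_{i=1}^m w_i·⟨a_i, v⟩²)^{1/2} ≤ (1+γ)·‖Av‖₂. -/

import Mathlib

open Matrix

namespace BSS

variable {n : ℕ}

abbrev Mat (n : ℕ) := Matrix (Fin n) (Fin n) ℝ

/-- quadratic form -/
def qf (M : Mat n) (x : Fin n → ℝ) : ℝ := x ⬝ᵥ (M *ᵥ x)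

lemma qf_pos {M : Mat n} (hM : M.PosDef) {x : Fin n → ℝ} (hx : x ≠ 0) : 0 < qf M x := by
  simpa [qf] using hM.dotProduct_mulVec_pos hx

lemma qf_nonneg {M : Mat n} (hM : M.PosSemidef) (x : Fin n → ℝ) : 0 ≤ qf M x := by
  simpa [qf] using hM.dotProduct_mulVec_nonneg x

lemma qf_add (M N : Mat n) (x : Fin n → ℝ) : qf (M + N) x = qf M x + qf N x := by
  simp [qf, add_mulVec, dotProduct_add]

lemma qf_sub (M N : Mat n) (x : Fin n → ℝ) : qf (M - N) x = qf M x - qf N x := by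
  simp [qf, sub_mulVec, dotProduct_sub]

lemma qf_smul (c : ℝ) (M : Mat n) (x : Fin n → ℝ) : qf (c • M) x = c * qf M x := by
  simp [qf, smul_mulVec, dotProduct_smul]

lemma qf_one (x : Fin n → ℝ) : qf (1 : Mat n) x = x ⬝ᵥ x := by simp [qf]

lemma vecMulVec_mulVec (v w x : Fin n → ℝ) :
    vecMulVec v w *ᵥ x = (w ⬝ᵥ x) • v := by
  ext i
  simp only [vecMulVec_apply, mulVec, dotProduct, Pi.smul_apply, smul_eq_mul, Finset.sum_mul]
  exact Finset.sum_congr rfl fun k _ => by ring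

lemma qf_vecMulVec (v x : Fin n → ℝ) : qf (vecMulVec v v) x = (v ⬝ᵥ x) ^ 2 := by
  simp [qf, vecMulVec_mulVec, dotProduct_smul, dotProduct_comm, sq]

lemma vecMulVec_posSemidef (v : Fin n → ℝ) : (vecMulVec v v).PosSemidef := by
  refine Matrix.PosSemidef.of_dotProduct_mulVec_nonneg ?_ ?_
  · ext i j
    simp [vecMulVec_apply, conjTranspose_apply, mul_comm]
  · intro x
    have : (star x) ⬝ᵥ (vecMulVec v v *ᵥ x) = (v ⬝ᵥ x) ^ 2 := by
      simpa [qf] using qf_vecMulVec v x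
    rw [this]
    positivity

lemma trace_mul_vecMulVec (X : Mat n) (v w : Fin n → ℝ) :
    (X * vecMulVec v w).trace = w ⬝ᵥ (X *ᵥ v) := by
  simp only [trace, diag, mul_apply, vecMulVec_apply, dotProduct, mulVec, Finset.mul_sum]
  exact Finset.sum_congr rfl fun i _ => Finset.sum_congr rfl fun k _ => by ring

lemma qf_eq_trace (M : Mat n) (v : Fin n → ℝ) :
    qf M v = (M * vecMulVec v v).trace := by
  rw [trace_mul_vecMulVec]; rfl

/-- diagonal entries of PSD matrices are nonneg, hence trace nonneg -/
lemma psd_trace_nonneg {M : Mat n} (hM : M.PosSemidef) : 0 ≤ M.trace := by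
  have h : ∀ i, 0 ≤ M i i := by
    intro i
    have := hM.dotProduct_mulVec_nonneg (Pi.single i 1)
    simpa [dotProduct, mulVec, Pi.single_apply] using this
  exact Finset.sum_nonneg fun i _ => h i

lemma pd_trace_pos {M : Mat n} (hM : M.PosDef) (hn : 0 < n) : 0 < M.trace := by
  have h : ∀ i, 0 < M i i := by
    intro i
    have := hM.dotProduct_mulVec_pos (x := Pi.single i 1) (by
      intro h
      have := congrFun h i
      simp [Pi.single_apply] at this)
    simpa [dotProduct, mulVec, Pi.single_apply] using this
  have : (0:ℝ) < ∑ i : Fin n, M i i :=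
    Finset.sum_pos (fun i _ => h i) (by simpa [Finset.univ_nonempty_iff] using Fin.pos_iff_nonempty.mp hn)
  simpa [trace, diag] using this

open scoped MatrixOrder in
lemma posSemidef_iff_eq_transpose_mul_self {Q : Mat n} :
    Q.PosSemidef ↔ ∃ B : Mat n, Q = Bᴴ * B := by
  constructor
  · intro hQ
    refine ⟨CFC.sqrt Q, ?_⟩
    have hs : (CFC.sqrt Q).PosSemidef := Matrix.nonneg_iff_posSemidef.mp (CFC.sqrt_nonneg Q)
    rw [hs.1.eq, CFC.sqrt_mul_sqrt_self Q (Matrix.nonneg_iff_posSemidef.mpr hQ)]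
  · rintro ⟨B, rfl⟩
    exact posSemidef_conjTranspose_mul_self B

/-- trace of a product of two PSD matrices is nonnegative -/
lemma trace_mul_nonneg {P Q : Mat n} (hP : P.PosSemidef) (hQ : Q.PosSemidef) :
    0 ≤ (P * Q).trace := by
  obtain ⟨B, hB⟩ := posSemidef_iff_eq_transpose_mul_self.mp hP
  obtain ⟨C, hC⟩ := posSemidef_iff_eq_transpose_mul_self.mp hQ
  have key : (P * Q).trace = ((B * Cᴴ) * (B * Cᴴ)ᴴ).trace := by
    rw [hB, hC, conjTranspose_mul, conjTranspose_conjTranspose]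
    rw [show Bᴴ * B * (Cᴴ * C) = Bᴴ * (B * Cᴴ * C) by simp only [Matrix.mul_assoc]]
    rw [trace_mul_comm]
    simp only [Matrix.mul_assoc]
  rw [key]
  exact psd_trace_nonneg (posSemidef_self_mul_conjTranspose (B * Cᴴ))



lemma dot_cs (a b : Fin n → ℝ) : (a ⬝ᵥ b)^2 ≤ (a ⬝ᵥ a) * (b ⬝ᵥ b) := by
  have := Finset.sum_mul_sq_le_sq_mul_sq Finset.univ a b
  simpa [dotProduct, sq] using this

lemma dot_self_nonneg (a : Fin n → ℝ) : 0 ≤ a ⬝ᵥ a := by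
  apply Finset.sum_nonneg; intro i _; exact mul_self_nonneg _

lemma dot_self_pos {a : Fin n → ℝ} (ha : a ≠ 0) : 0 < a ⬝ᵥ a := by
  rcases lt_or_eq_of_le (dot_self_nonneg a) with h | h
  · exact h
  · exact absurd (dotProduct_self_eq_zero.mp h.symm) ha

lemma mulVec_dot (A : Mat n) (x y : Fin n → ℝ) : (A *ᵥ x) ⬝ᵥ y = x ⬝ᵥ (Aᵀ *ᵥ y) := by
  simp only [dotProduct, mulVec, transpose_apply, Finset.sum_mul, Finset.mul_sum]
  rw [Finset.sum_comm]
  exact Finset.sum_congr rfl fun i _ => Finset.sum_congr rfl fun j _ => by ring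

lemma herm_eq_transpose {M : Mat n} (hM : M.IsHermitian) : Mᵀ = M := by
  rw [← conjTranspose_eq_transpose_of_trivial]; exact hM

open scoped MatrixOrder in
/-- Cauchy-Schwarz in the M-inner product -/
lemma cs_qf {M : Mat n} (hM : M.PosDef) (v x : Fin n → ℝ) :
    (v ⬝ᵥ x)^2 ≤ qf M x * qf M⁻¹ v := by
  classical
  set S := CFC.sqrt M with hSdef
  have hS : S.PosSemidef := Matrix.nonneg_iff_posSemidef.mp (CFC.sqrt_nonneg M)
  have hSS : S * S = M := CFC.sqrt_mul_sqrt_self M (Matrix.nonneg_iff_posSemidef.mpr hM.posSemidef)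
  have hdetM : (0:ℝ) < M.det := hM.det_pos
  have hdetS : IsUnit S.det := by
    refine isUnit_iff_ne_zero.mpr fun h => ?_
    have : S.det * S.det = M.det := by rw [← det_mul, hSS]
    rw [h, mul_zero] at this; exact absurd this.symm (ne_of_gt hdetM)
  have hSsymm : Sᵀ = S := herm_eq_transpose hS.isHermitian
  have hSinvsymm : (S⁻¹)ᵀ = S⁻¹ := by rw [transpose_nonsing_inv, hSsymm]
  have h0 : v ⬝ᵥ x = (S *ᵥ x) ⬝ᵥ (S⁻¹ *ᵥ v) := by
    rw [mulVec_dot, hSsymm, mulVec_mulVec, Matrix.mul_nonsing_inv _ hdetS, one_mulVec,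
      dotProduct_comm]
  have h1 : (S *ᵥ x) ⬝ᵥ (S *ᵥ x) = qf M x := by
    rw [mulVec_dot, hSsymm, mulVec_mulVec, hSS]; rfl
  have h2 : (S⁻¹ *ᵥ v) ⬝ᵥ (S⁻¹ *ᵥ v) = qf M⁻¹ v := by
    rw [mulVec_dot, hSinvsymm, mulVec_mulVec, ← Matrix.mul_inv_rev, hSS]; rfl
  rw [h0, ← h1, ← h2]
  exact dot_cs _ _

lemma qf_le_trace {Q : Mat n} (hQ : Q.PosSemidef) (x : Fin n → ℝ) :
    qf Q x ≤ Q.trace * (x ⬝ᵥ x) := by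
  obtain ⟨B, hB⟩ := posSemidef_iff_eq_transpose_mul_self.mp hQ
  have hBt : Bᴴ = Bᵀ := conjTranspose_eq_transpose_of_trivial B
  have hqf : qf Q x = (B *ᵥ x) ⬝ᵥ (B *ᵥ x) := by
    rw [hB, hBt, qf, ← mulVec_mulVec, ← mulVec_dot]
  have htr : Q.trace = ∑ i, ∑ j, B i j ^ 2 := by
    rw [hB, hBt, trace]
    simp only [diag, mul_apply, transpose_apply]
    rw [Finset.sum_comm]
    exact Finset.sum_congr rfl fun i _ => Finset.sum_congr rfl fun j _ => (sq (B i j)) ▸ rfl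
  rw [hqf, htr]
  have : ∀ i, (B *ᵥ x) i * (B *ᵥ x) i ≤ (∑ j, B i j ^ 2) * (x ⬝ᵥ x) := by
    intro i
    have := Finset.sum_mul_sq_le_sq_mul_sq Finset.univ (B i) x
    calc (B *ᵥ x) i * (B *ᵥ x) i = (∑ j, B i j * x j)^2 := by simp [mulVec, dotProduct, sq]
    _ ≤ (∑ j, B i j ^ 2) * (∑ j, x j ^2) := this
    _ = (∑ j, B i j ^ 2) * (x ⬝ᵥ x) := by simp [dotProduct, sq]
  calc (B *ᵥ x) ⬝ᵥ (B *ᵥ x) = ∑ i, (B *ᵥ x) i * (B *ᵥ x) i := rfl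
  _ ≤ ∑ i, (∑ j, B i j ^ 2) * (x ⬝ᵥ x) := Finset.sum_le_sum fun i _ => this i
  _ = (∑ i, ∑ j, B i j ^ 2) * (x ⬝ᵥ x) := by rw [Finset.sum_mul]


lemma smul_posSemidef {c : ℝ} (hc : 0 ≤ c) {M : Mat n} (hM : M.PosSemidef) :
    (c • M).PosSemidef := by
  refine Matrix.PosSemidef.of_dotProduct_mulVec_nonneg ?_ ?_
  · have := hM.isHermitian
    unfold IsHermitian at *
    rw [conjTranspose_smul, this, star_trivial]
  · intro x
    have := hM.dotProduct_mulVec_nonneg x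
    rw [smul_mulVec, dotProduct_smul]
    exact smul_nonneg hc this

lemma smul_one_posDef {c : ℝ} (hc : 0 < c) : (c • (1 : Mat n)).PosDef := by
  refine Matrix.PosDef.of_dotProduct_mulVec_pos ?_ ?_
  · unfold IsHermitian
    rw [conjTranspose_smul, conjTranspose_one, star_trivial]
  · intro x hx
    rw [smul_mulVec, dotProduct_smul, one_mulVec]
    have : (0:ℝ) < x ⬝ᵥ x := by
      rcases lt_or_eq_of_le (Finset.sum_nonneg (fun i (_ : i ∈ Finset.univ) => mul_self_nonneg (x i))) with h | h
      · exact h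
      · exact absurd (dotProduct_self_eq_zero.mp h.symm) hx
    simpa [star_trivial] using mul_pos hc this

lemma vecMulVec_mul_mul (B : Mat n) (v : Fin n → ℝ) :
    vecMulVec v v * B * vecMulVec v v = (qf B v) • vecMulVec v v := by
  ext i j
  simp only [mul_apply, vecMulVec_apply, Matrix.smul_apply, smul_eq_mul, qf, dotProduct, mulVec,
    Finset.sum_mul, Finset.mul_sum]
  rw [Finset.sum_comm]
  exact Finset.sum_congr rfl fun k _ => Finset.sum_congr rfl fun l _ => by ring

lemma sherman {M : Mat n} (hdet : IsUnit M.det) (s : ℝ) (v : Fin n → ℝ)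
    (h : s * qf M⁻¹ v ≠ 1) :
    (M - s • vecMulVec v v)⁻¹ =
      M⁻¹ + (s / (1 - s * qf M⁻¹ v)) • (M⁻¹ * vecMulVec v v * M⁻¹) := by
  set V := vecMulVec v v with hV
  set q := qf M⁻¹ v with hq
  set c := s / (1 - s * q) with hc
  have hne : 1 - s * q ≠ 0 := sub_ne_zero_of_ne (Ne.symm h)
  have hcs : c * (1 - s * q) = s := div_mul_cancel₀ _ hne
  apply inv_eq_right_inv
  have hMM : M * M⁻¹ = 1 := mul_nonsing_inv _ hdet
  have h2 : V * (M⁻¹ * (V * M⁻¹)) = q • (V * M⁻¹) := by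
    calc V * (M⁻¹ * (V * M⁻¹)) = (V * M⁻¹ * V) * M⁻¹ := by
          simp only [Matrix.mul_assoc]
    _ = (q • V) * M⁻¹ := by rw [vecMulVec_mul_mul]
    _ = q • (V * M⁻¹) := by rw [smul_mul_assoc]
  have expand : (M - s • V) * (M⁻¹ + c • (M⁻¹ * V * M⁻¹)) =
      1 + (c - s - s * (c * q)) • (V * M⁻¹) := by
    rw [sub_mul, mul_add, mul_add, hMM]
    simp only [mul_smul_comm, smul_mul_assoc, Matrix.mul_assoc, smul_smul]
    rw [← Matrix.mul_assoc M M⁻¹ _, hMM, Matrix.one_mul]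
    rw [h2]
    rw [smul_smul]
    module
  rw [expand]
  have hz : c - s - s * (c * q) = 0 := by linear_combination hcs
  rw [hz, zero_smul, add_zero]



lemma posDef_conj {M N : Mat n} (hM : M.PosDef) (hN : N.IsHermitian)
    (hdet : IsUnit N.det) : (N * M * N).PosDef := by
  have hNt : Nᵀ = N := herm_eq_transpose hN
  refine Matrix.PosDef.of_dotProduct_mulVec_pos ?_ ?_
  · unfold IsHermitian at *
    rw [conjTranspose_mul, conjTranspose_mul, hN, hM.isHermitian, Matrix.mul_assoc]
  · intro x hx
    have hNx : N *ᵥ x ≠ 0 := by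
      intro hz
      apply hx
      have : N⁻¹ *ᵥ (N *ᵥ x) = x := by
        rw [mulVec_mulVec, nonsing_inv_mul _ hdet, one_mulVec]
      rw [← this, hz, mulVec_zero]
    have key : x ⬝ᵥ ((N * M * N) *ᵥ x) = (N *ᵥ x) ⬝ᵥ (M *ᵥ (N *ᵥ x)) := by
      rw [← mulVec_mulVec, ← mulVec_mulVec, mulVec_dot, hNt]
    rw [star_trivial, key]
    exact qf_pos hM hNx

/-- if `tr M⁻¹ ≤ ε` and `δ * ε < 1` then `M - δ•1` is still positive definite -/
lemma posDef_sub_smul_one {M : Mat n} (hM : M.PosDef) {ε δ : ℝ} (hδ : 0 ≤ δ)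
    (hε : 0 < ε) (htr : M⁻¹.trace ≤ ε) (hεδ : δ * ε < 1) :
    (M - δ • (1 : Mat n)).PosDef := by
  refine Matrix.PosDef.of_dotProduct_mulVec_pos ?_ ?_
  · exact hM.isHermitian.sub (by
      unfold IsHermitian
      rw [conjTranspose_smul, conjTranspose_one, star_trivial])
  · intro x hx
    have hx2 : 0 < x ⬝ᵥ x := dot_self_pos hx
    have hcs := cs_qf hM x x
    have hle : qf M⁻¹ x ≤ M⁻¹.trace * (x ⬝ᵥ x) := qf_le_trace hM.inv.posSemidef x
    have hq : 0 < qf M x := qf_pos hM hx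
    have hgoal : x ⬝ᵥ ((M - δ • (1:Mat n)) *ᵥ x) = qf M x - δ * (x ⬝ᵥ x) := by
      rw [sub_mulVec, dotProduct_sub, smul_mulVec, one_mulVec, dotProduct_smul]
      rfl
    rw [star_trivial, hgoal]
    have h1 : (x ⬝ᵥ x)^2 ≤ qf M x * (ε * (x ⬝ᵥ x)) := by
      calc (x ⬝ᵥ x)^2 ≤ qf M x * qf M⁻¹ x := by
            have := cs_qf hM x x; rwa [dotProduct_comm] at this
      _ ≤ qf M x * (ε * (x ⬝ᵥ x)) := by
            apply mul_le_mul_of_nonneg_left _ (le_of_lt hq)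
            calc qf M⁻¹ x ≤ M⁻¹.trace * (x ⬝ᵥ x) := hle
            _ ≤ ε * (x ⬝ᵥ x) := mul_le_mul_of_nonneg_right htr (le_of_lt hx2)
    have h2 : x ⬝ᵥ x ≤ qf M x * ε := by nlinarith [h1, hx2]
    have h3 : δ * (x ⬝ᵥ x) ≤ δ * (qf M x * ε) := mul_le_mul_of_nonneg_left h2 hδ
    nlinarith [mul_lt_mul_of_pos_right hεδ hq]

/-- subtracting a small rank-one matrix preserves positive definiteness -/
lemma posDef_sub_rankOne {M : Mat n} (hM : M.PosDef) {s : ℝ} (hs : 0 ≤ s)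
    (v : Fin n → ℝ) (h : s * qf M⁻¹ v < 1) :
    (M - s • vecMulVec v v).PosDef := by
  refine Matrix.PosDef.of_dotProduct_mulVec_pos ?_ ?_
  · exact hM.isHermitian.sub (by
      unfold IsHermitian
      rw [conjTranspose_smul, star_trivial, (vecMulVec_posSemidef v).isHermitian])
  · intro x hx
    have hgoal : x ⬝ᵥ ((M - s • vecMulVec v v) *ᵥ x) = qf M x - s * (v ⬝ᵥ x)^2 := by
      rw [sub_mulVec, dotProduct_sub, smul_mulVec, dotProduct_smul]
      have := qf_vecMulVec v x
      rw [qf] at this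
      rw [this]
      rfl
    rw [star_trivial, hgoal]
    have hq : 0 < qf M x := qf_pos hM hx
    have hcs := cs_qf hM v x
    have hnn : 0 ≤ qf M⁻¹ v := qf_nonneg hM.inv.posSemidef v
    nlinarith [hq, hcs, h, hs, hnn]

lemma pd_det {M : Mat n} (hM : M.PosDef) : IsUnit M.det :=
  (Matrix.isUnit_iff_isUnit_det M).mp hM.isUnit

lemma inv_sub_inv' {M M' : Mat n} (h : IsUnit M.det) (h' : IsUnit M'.det) :
    M⁻¹ - M'⁻¹ = M⁻¹ * (M' - M) * M'⁻¹ := by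
  rw [Matrix.mul_sub, Matrix.sub_mul, Matrix.mul_assoc, mul_nonsing_inv _ h',
    Matrix.mul_one, nonsing_inv_mul _ h, Matrix.one_mul]

lemma shift_posDef {M : Mat n} (hM : M.PosDef) {δ : ℝ} (hδ : 0 ≤ δ) :
    (M + δ • (1 : Mat n)).PosDef := by
  rcases eq_or_lt_of_le hδ with h | h
  · simpa [← h] using hM
  · exact hM.add_posSemidef (smul_one_posDef h).posSemidef

lemma inv_sub_inv_shift {M : Mat n} (hM : M.PosDef) {δ : ℝ} (hδ : 0 ≤ δ) :
    M⁻¹ - (M + δ • 1)⁻¹ = δ • (M⁻¹ * (M + δ • 1)⁻¹) := by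
  rw [inv_sub_inv' (pd_det hM) (pd_det (shift_posDef hM hδ))]
  rw [add_sub_cancel_left]
  rw [Matrix.mul_smul, Matrix.smul_mul, Matrix.mul_one]

/-- `tr M⁻¹ - tr (M+δ)⁻¹ = δ tr (M⁻¹ (M+δ)⁻¹)` -/
lemma trace_inv_shift_diff {M : Mat n} (hM : M.PosDef) {δ : ℝ} (hδ : 0 ≤ δ) :
    M⁻¹.trace - (M + δ • 1)⁻¹.trace = δ * (M⁻¹ * (M + δ • 1)⁻¹).trace := by
  have := congrArg trace (inv_sub_inv_shift hM hδ)
  rwa [trace_sub, trace_smul, smul_eq_mul] at this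

lemma prod_inv_psd {M : Mat n} (hM : M.PosDef) : (M⁻¹ * M⁻¹).PosSemidef := by
  have : M⁻¹ * M⁻¹ = M⁻¹ * 1 * M⁻¹ := by rw [Matrix.mul_one]
  rw [this]
  exact (posDef_conj Matrix.PosDef.one hM.inv.isHermitian (pd_det hM.inv)).posSemidef

lemma prod_inv_pd {M : Mat n} (hM : M.PosDef) : (M⁻¹ * M⁻¹).PosDef := by
  have : M⁻¹ * M⁻¹ = M⁻¹ * 1 * M⁻¹ := by rw [Matrix.mul_one]
  rw [this]
  exact posDef_conj Matrix.PosDef.one hM.inv.isHermitian (pd_det hM.inv)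

/-- `tr ((M+δ)⁻²) ≤ tr (M⁻¹ (M+δ)⁻¹)` -/
lemma trace_sq_le_trace_prod {M : Mat n} (hM : M.PosDef) {δ : ℝ} (hδ : 0 ≤ δ) :
    ((M + δ • 1)⁻¹ * (M + δ • 1)⁻¹).trace ≤ (M⁻¹ * (M + δ • 1)⁻¹).trace := by
  set M' := M + δ • (1 : Mat n) with hM'def
  have hM' : M'.PosDef := shift_posDef hM hδ
  have key : M⁻¹ * M'⁻¹ - M'⁻¹ * M'⁻¹ = δ • (M⁻¹ * (M'⁻¹ * M'⁻¹)) := by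
    rw [← Matrix.sub_mul, inv_sub_inv_shift hM hδ, Matrix.smul_mul, Matrix.mul_assoc]
  have hpsd : (M⁻¹ * (M'⁻¹ * M'⁻¹)).trace ≥ 0 :=
    trace_mul_nonneg hM.inv.posSemidef (prod_inv_psd hM')
  have := congrArg trace key
  rw [trace_sub, trace_smul, smul_eq_mul] at this
  nlinarith [mul_nonneg hδ hpsd]

/-- Cauchy-Schwarz for the trace (Frobenius) inner product -/
lemma trace_cs (X Y : Mat n) : ((Xᵀ * Y).trace)^2 ≤ (Xᵀ * X).trace * (Yᵀ * Y).trace := by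
  have h : ∀ (A B : Mat n), (Aᵀ * B).trace = ∑ p : Fin n × Fin n, A p.1 p.2 * B p.1 p.2 := by
    intro A B
    rw [Fintype.sum_prod_type]
    rw [trace]
    simp only [diag, mul_apply, transpose_apply]
    rw [Finset.sum_comm]
  rw [h, h, h]
  have := Finset.sum_mul_sq_le_sq_mul_sq Finset.univ
    (fun p : Fin n × Fin n => X p.1 p.2) (fun p : Fin n × Fin n => Y p.1 p.2)
  simpa [sq] using this



open scoped MatrixOrder in
lemma trace_cs_sym {A Q : Mat n} (hA : A.IsHermitian) (hQ : Q.PosSemidef) :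
    ((A * Q).trace)^2 ≤ (A * A * Q).trace * Q.trace := by
  classical
  set R := CFC.sqrt Q with hRdef
  have hR : R.PosSemidef := Matrix.nonneg_iff_posSemidef.mp (CFC.sqrt_nonneg Q)
  have hRR : R * R = Q := CFC.sqrt_mul_sqrt_self Q (Matrix.nonneg_iff_posSemidef.mpr hQ)
  have hAt : Aᵀ = A := herm_eq_transpose hA
  have hRt : Rᵀ = R := herm_eq_transpose hR.isHermitian
  have h1 : ((A * R)ᵀ * R).trace = (A * Q).trace := by
    rw [transpose_mul, hAt, hRt, Matrix.mul_assoc, trace_mul_comm, Matrix.mul_assoc, hRR]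
  have h2 : ((A * R)ᵀ * (A * R)).trace = (A * A * Q).trace := by
    rw [transpose_mul, hAt, hRt]
    calc (R * A * (A * R)).trace = (R * (A * A * R)).trace := by
          simp only [Matrix.mul_assoc]
    _ = (A * A * R * R).trace := by rw [trace_mul_comm]
    _ = (A * A * Q).trace := by rw [Matrix.mul_assoc, hRR]
  have h3 : (Rᵀ * R).trace = Q.trace := by rw [hRt, hRR]
  have := trace_cs (A * R) R
  rw [h1, h2, h3] at this
  exact this

lemma trace_sq_sub_prod {P : Mat n} (hP : P.PosDef) {δ : ℝ} (hδ : 0 ≤ δ) :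
    (P⁻¹ * P⁻¹).trace - (P⁻¹ * (P + δ • 1)⁻¹).trace
      = δ * ((P⁻¹ * P⁻¹) * (P + δ • 1)⁻¹).trace := by
  have key : P⁻¹ * P⁻¹ - P⁻¹ * (P + δ • 1)⁻¹ = δ • ((P⁻¹ * P⁻¹) * (P + δ • 1)⁻¹) := by
    rw [← Matrix.mul_sub, inv_sub_inv_shift hP hδ, Matrix.mul_smul, ← Matrix.mul_assoc]
  have := congrArg trace key
  rwa [trace_sub, trace_smul, smul_eq_mul] at this

lemma trace_sherman {M : Mat n} (hdet : IsUnit M.det) (s : ℝ) (v : Fin n → ℝ)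
    (h : s * qf M⁻¹ v ≠ 1) :
    (M - s • vecMulVec v v)⁻¹.trace
      = M⁻¹.trace + (s / (1 - s * qf M⁻¹ v)) * qf (M⁻¹ * M⁻¹) v := by
  rw [sherman hdet s v h, trace_add, trace_smul, smul_eq_mul]
  congr 1
  congr 1
  rw [trace_mul_cycle, trace_mul_vecMulVec]
  rfl

lemma sum_qf_eq_trace {m : ℕ} (X : Mat n) (v : Fin m → Fin n → ℝ)
    (hv : ∑ i, vecMulVec (v i) (v i) = 1) : ∑ i, qf X (v i) = X.trace := by
  have h : ∀ i ∈ Finset.univ, qf X (v i) = (X * vecMulVec (v i) (v i)).trace :=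
    fun i _ => qf_eq_trace X (v i)
  rw [Finset.sum_congr rfl h, ← trace_sum, ← Matrix.mul_sum, hv, Matrix.mul_one]

lemma qf_zero_vec (M : Mat n) : qf M 0 = 0 := by simp [qf]

set_option maxHeartbeats 1000000 in
/-- One step of the BSS barrier argument. -/
lemma step {m : ℕ} (hn : 0 < n) (v : Fin m → Fin n → ℝ)
    (hv : ∑ i, vecMulVec (v i) (v i) = 1)
    {S : Mat n} {u l δU δL εU εL : ℝ}
    (hδU : 0 < δU) (hδL : 0 < δL) (hεL : 0 < εL)
    (hεδ : δL * εL < 1)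
    (hbal : 1/δU + εU ≤ 1/δL - εL)
    (hU : (u • 1 - S).PosDef) (hL : (S - l • 1).PosDef)
    (hΦU : (u • 1 - S)⁻¹.trace ≤ εU) (hΦL : (S - l • 1)⁻¹.trace ≤ εL) :
    ∃ i : Fin m, ∃ s : ℝ, 0 ≤ s ∧
      (((u + δU) • 1 - (S + s • vecMulVec (v i) (v i))).PosDef) ∧
      (((S + s • vecMulVec (v i) (v i)) - (l + δL) • 1).PosDef) ∧
      (((u + δU) • 1 - (S + s • vecMulVec (v i) (v i)))⁻¹.trace ≤ εU) ∧
      (((S + s • vecMulVec (v i) (v i)) - (l + δL) • 1)⁻¹.trace ≤ εL) := by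
  classical
  set M : Mat n := u • 1 - S with hMdef
  set M' : Mat n := M + δU • 1 with hM'def
  have hM' : M'.PosDef := shift_posDef hU hδU.le
  set P' : Mat n := S - l • 1 with hP'def
  have hP : (P' - δL • (1:Mat n)).PosDef := posDef_sub_smul_one hL hδL.le hεL hΦL hεδ
  set P : Mat n := P' - δL • 1 with hPdef
  have hP'eq : P + δL • (1:Mat n) = P' := by rw [hPdef]; module
  -- upper quantities
  have hΔUeq' : M⁻¹.trace - M'⁻¹.trace = δU * (M⁻¹ * M'⁻¹).trace :=
    trace_inv_shift_diff hU hδU.le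
  obtain ⟨ΔU, hΔUdef⟩ : ∃ x : ℝ, x = M⁻¹.trace - M'⁻¹.trace := ⟨_, rfl⟩
  obtain ⟨TU, hTUdef⟩ : ∃ x : ℝ, x = (M'⁻¹ * M'⁻¹).trace := ⟨_, rfl⟩
  have hTUpos : 0 < TU := hTUdef ▸ pd_trace_pos (prod_inv_pd hM') hn
  have hΔU_ge : δU * TU ≤ ΔU := by
    rw [hΔUdef, hΔUeq', hTUdef]
    exact mul_le_mul_of_nonneg_left (trace_sq_le_trace_prod hU hδU.le) hδU.le
  have hΔUpos : 0 < ΔU := lt_of_lt_of_le (mul_pos hδU hTUpos) hΔU_ge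
  -- lower quantities
  obtain ⟨D, hDdef⟩ : ∃ x : ℝ, x = (P⁻¹ * P'⁻¹).trace := ⟨_, rfl⟩
  have hΔLeq : P⁻¹.trace - P'⁻¹.trace = δL * D := by
    rw [hDdef]
    have := trace_inv_shift_diff hP (le_of_lt hδL)
    rwa [hP'eq] at this
  obtain ⟨E, hEdef⟩ : ∃ x : ℝ, x = ((P⁻¹ * P⁻¹) * P'⁻¹).trace := ⟨_, rfl⟩
  have hEeq : (P⁻¹ * P⁻¹).trace - D = δL * E := by
    rw [hDdef, hEdef]
    have := trace_sq_sub_prod hP (le_of_lt hδL)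
    rwa [hP'eq] at this
  have hE0 : 0 ≤ E := hEdef ▸ trace_mul_nonneg (prod_inv_psd hP) hL.inv.posSemidef
  have hDpos : 0 < D := by
    rw [hDdef]
    have h1 := trace_sq_le_trace_prod hP (le_of_lt hδL)
    rw [hP'eq] at h1
    exact lt_of_lt_of_le (pd_trace_pos (prod_inv_pd hL) hn) h1
  have hCS : D^2 ≤ E * P'⁻¹.trace := by
    rw [hDdef, hEdef]
    exact trace_cs_sym hP.inv.isHermitian hL.inv.posSemidef
  obtain ⟨ΔL, hΔLdef⟩ : ∃ x : ℝ, x = δL * D := ⟨_, rfl⟩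
  have hΔLpos : 0 < ΔL := hΔLdef ▸ mul_pos hδL hDpos
  -- the U and L functionals
  set Uf : (Fin n → ℝ) → ℝ := fun w => qf (M'⁻¹ * M'⁻¹) w / ΔU + qf M'⁻¹ w with hUfdef
  set Lf : (Fin n → ℝ) → ℝ := fun w => qf (P⁻¹ * P⁻¹) w / ΔL - qf P⁻¹ w with hLfdef
  have hsumU : ∑ i, Uf (v i) ≤ 1/δU + εU := by
    have h1 : ∑ i, Uf (v i) = TU / ΔU + M'⁻¹.trace := by
      rw [hUfdef]
      simp only [Finset.sum_add_distrib, ← Finset.sum_div]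
      rw [sum_qf_eq_trace _ v hv, sum_qf_eq_trace _ v hv, hTUdef]
    rw [h1]
    have h2 : TU / ΔU ≤ 1 / δU := by
      rw [div_le_div_iff₀ hΔUpos hδU]
      nlinarith [hΔU_ge]
    have h3 : M'⁻¹.trace ≤ εU := by
      have h4 : M'⁻¹.trace = M⁻¹.trace - ΔU := by rw [hΔUdef]; ring
      rw [h4]
      linarith [hΦU, hΔUpos]
    linarith
  have hsumL : 1/δL - εL ≤ ∑ i, Lf (v i) := by
    have h1 : ∑ i, Lf (v i) = (P⁻¹ * P⁻¹).trace / ΔL - P⁻¹.trace := by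
      rw [hLfdef]
      simp only [Finset.sum_sub_distrib, ← Finset.sum_div]
      rw [sum_qf_eq_trace _ v hv, sum_qf_eq_trace _ v hv]
    rw [h1]
    have htrP : P⁻¹.trace ≤ εL + ΔL := by
      have h4 : P⁻¹.trace = P'⁻¹.trace + ΔL := by rw [hΔLdef, ← hΔLeq]; ring
      rw [h4]; linarith [hΦL]
    have htr2 : (P⁻¹ * P⁻¹).trace = D + δL * E := by rw [← hEeq]; ring
    have hEdD : δL * D ≤ E / D := by
      rw [le_div_iff₀ hDpos]
      have hDE : D^2 ≤ E * εL := le_trans hCS (mul_le_mul_of_nonneg_left hΦL hE0)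
      nlinarith [hεδ, hE0, hδL]
    have hsplit : (P⁻¹ * P⁻¹).trace / ΔL = 1/δL + E/D := by
      rw [htr2, hΔLdef]
      field_simp
    rw [hsplit]
    linarith
  -- existence of a good index
  have hexnz : ∃ i, v i ≠ 0 := by
    by_contra hno
    push_neg at hno
    have hz : (∑ i, vecMulVec (v i) (v i)) = 0 := by
      apply Finset.sum_eq_zero
      intro i _
      rw [hno i]
      ext a b
      simp [vecMulVec_apply]
    rw [hv] at hz
    have := congrFun (congrFun hz ⟨0, hn⟩) ⟨0, hn⟩
    simp at this
  have hLfzero : ∀ i, v i = 0 → Uf (v i) = 0 ∧ Lf (v i) = 0 := by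
    intro i h
    rw [hUfdef, hLfdef]
    simp [h, qf_zero_vec]
  have hgood : ∃ i, v i ≠ 0 ∧ Uf (v i) ≤ Lf (v i) := by
    by_contra hno
    push_neg at hno
    have hlt : ∑ i, Lf (v i) < ∑ i, Uf (v i) := by
      obtain ⟨i₀, hi₀⟩ := hexnz
      apply Finset.sum_lt_sum
      · intro i _
        by_cases h : v i = 0
        · rw [(hLfzero i h).1, (hLfzero i h).2]
        · exact le_of_lt (hno i h)
      · exact ⟨i₀, Finset.mem_univ _, hno i₀ hi₀⟩
    linarith [hsumU, hsumL, hbal]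
  obtain ⟨i, hvi, hUL⟩ := hgood
  obtain ⟨w, hwdef⟩ : ∃ x : Fin n → ℝ, x = v i := ⟨_, rfl⟩
  rw [← hwdef] at hvi hUL
  obtain ⟨q2, hq2def⟩ : ∃ x : ℝ, x = qf (M'⁻¹ * M'⁻¹) w := ⟨_, rfl⟩
  obtain ⟨q1, hq1def⟩ : ∃ x : ℝ, x = qf M'⁻¹ w := ⟨_, rfl⟩
  have hUfw : Uf w = q2 / ΔU + q1 := by rw [hUfdef, hq2def, hq1def]
  have hq2pos : 0 < q2 := hq2def ▸ qf_pos (prod_inv_pd hM') hvi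
  have hq1nn : 0 ≤ q1 := hq1def ▸ qf_nonneg hM'.inv.posSemidef w
  have hUipos : 0 < Uf w := by
    rw [hUfw]
    have : 0 < q2 / ΔU := div_pos hq2pos hΔUpos
    linarith
  obtain ⟨s, hsdef⟩ : ∃ x : ℝ, x = (Uf w)⁻¹ := ⟨_, rfl⟩
  have hspos : 0 < s := hsdef ▸ inv_pos.mpr hUipos
  have hq1lt : s * q1 < 1 := by
    have h5 : q1 < Uf w := by
      rw [hUfw]
      have : 0 < q2 / ΔU := div_pos hq2pos hΔUpos
      linarith
    calc s * q1 < s * Uf w := mul_lt_mul_of_pos_left h5 hspos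
    _ = 1 := by rw [hsdef]; exact inv_mul_cancel₀ (ne_of_gt hUipos)
  have hrewU : (u + δU) • (1:Mat n) - (S + s • vecMulVec w w) = M' - s • vecMulVec w w := by
    rw [hM'def, hMdef, add_smul]; module
  have hrewL : (S + s • vecMulVec w w) - (l + δL) • (1:Mat n) = P + s • vecMulVec w w := by
    rw [hPdef, hP'def, add_smul]; module
  have hq1' : s * qf M'⁻¹ w < 1 := by rw [← hq1def]; exact hq1lt
  refine ⟨i, s, hspos.le, ?_, ?_, ?_, ?_⟩
  · rw [← hwdef, hrewU]
    exact posDef_sub_rankOne hM' hspos.le w hq1'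
  · rw [← hwdef, hrewL]
    exact hP.add_posSemidef (smul_posSemidef hspos.le (vecMulVec_posSemidef w))
  · -- upper potential
    rw [← hwdef, hrewU, trace_sherman (pd_det hM') s w (ne_of_lt hq1')]
    rw [← hq1def, ← hq2def]
    have hne1 : (1:ℝ) - s * q1 ≠ 0 := by linarith
    have key : s / (1 - s * q1) * q2 = ΔU := by
      have h7 : s * (q2 / ΔU + q1) = 1 := by
        rw [hsdef, hUfw]; exact inv_mul_cancel₀ (ne_of_gt (hUfw ▸ hUipos))
      have h7' : s * q2 / ΔU + s * q1 = 1 := by rw [← h7]; ring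
      have h8 : 1 - s * q1 = s * q2 / ΔU := by linarith
      rw [h8]
      field_simp [ne_of_gt hspos, ne_of_gt hq2pos, ne_of_gt hΔUpos]
    have htrM' : M'⁻¹.trace = M⁻¹.trace - ΔU := by rw [hΔUdef]; ring
    rw [key, htrM']
    linarith [hΦU]
  · -- lower potential
    rw [← hwdef, hrewL]
    obtain ⟨qP, hqPdef⟩ : ∃ x : ℝ, x = qf P⁻¹ w := ⟨_, rfl⟩
    obtain ⟨qP2, hqP2def⟩ : ∃ x : ℝ, x = qf (P⁻¹ * P⁻¹) w := ⟨_, rfl⟩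
    have hqPnn : 0 ≤ qP := hqPdef ▸ qf_nonneg hP.inv.posSemidef w
    have hqP2nn : 0 ≤ qP2 := hqP2def ▸ qf_nonneg (prod_inv_psd hP) w
    have hrw2 : P + s • vecMulVec w w = P - (-s) • vecMulVec w w := by
      rw [neg_smul, sub_neg_eq_add]
    have hcond : (-s) * qf P⁻¹ w ≠ 1 := by
      rw [← hqPdef]
      have : (-s) * qP ≤ 0 := mul_nonpos_of_nonpos_of_nonneg (by linarith) hqPnn
      linarith
    rw [hrw2, trace_sherman (pd_det hP) (-s) w hcond]
    rw [← hqPdef, ← hqP2def]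
    have h1p : 0 < 1 + s * qP := by positivity
    have hLfw : Lf w = qP2 / ΔL - qP := by rw [hLfdef, hqP2def, hqPdef]
    have hUfw_inv : Uf w = s⁻¹ := by rw [hsdef, inv_inv]
    -- from hUL : Uf w ≤ Lf w
    have hkey : ΔL * (1 + s * qP) ≤ s * qP2 := by
      have h' : s⁻¹ + qP ≤ qP2 / ΔL := by
        rw [← hUfw_inv]
        rw [hLfw] at hUL
        linarith
      have h'' : ΔL * (s⁻¹ + qP) ≤ qP2 := (le_div_iff₀' hΔLpos).mp h'
      have hcalc : ΔL * (1 + s * qP) = s * (ΔL * (s⁻¹ + qP)) := by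
        linear_combination (-ΔL) * mul_inv_cancel₀ (ne_of_gt hspos)
      rw [hcalc]
      exact mul_le_mul_of_nonneg_left h'' hspos.le
    have hgeq : (-s) / (1 - (-s) * qP) * qP2 = -(s * qP2 / (1 + s * qP)) := by
      have h6 : 1 - (-s) * qP = 1 + s * qP := by ring
      rw [h6, neg_div, neg_mul, div_mul_eq_mul_div]
    rw [hgeq]
    have hΔLle : ΔL ≤ s * qP2 / (1 + s * qP) := (le_div_iff₀ h1p).mpr hkey
    have htrP : P⁻¹.trace = P'⁻¹.trace + ΔL := by rw [hΔLdef, ← hΔLeq]; ring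
    rw [htrP]
    linarith [hΦL]

/-- weighted sum of rank-one matrices -/
def wsum {m : ℕ} (v : Fin m → Fin n → ℝ) (c : Fin m → ℝ) : Mat n :=
  ∑ i, c i • vecMulVec (v i) (v i)

lemma qf_wsum {m : ℕ} (v : Fin m → Fin n → ℝ) (c : Fin m → ℝ) (x : Fin n → ℝ) :
    qf (wsum v c) x = ∑ i, c i * (v i ⬝ᵥ x)^2 := by
  rw [qf_eq_trace, wsum, Finset.sum_mul, trace_sum]
  congr 1
  ext i
  rw [smul_mul_assoc, trace_smul, smul_eq_mul, trace_mul_vecMulVec]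
  congr 1
  have := qf_vecMulVec (v i) x
  rw [qf] at this
  exact this

lemma wsum_update {m : ℕ} (v : Fin m → Fin n → ℝ) (c : Fin m → ℝ) (i : Fin m) (s : ℝ) :
    wsum v (Function.update c i (c i + s)) = wsum v c + s • vecMulVec (v i) (v i) := by
  unfold wsum
  have hsplit : ∀ (g : Fin m → Mat n), ∑ j, g j = g i + ∑ j ∈ Finset.univ.erase i, g j :=
    fun g => (Finset.add_sum_erase _ g (Finset.mem_univ i)).symm
  rw [hsplit (fun j => Function.update c i (c i + s) j • vecMulVec (v j) (v j)),
      hsplit (fun j => c j • vecMulVec (v j) (v j))]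
  simp only [Function.update_self]
  have h2 : ∑ j ∈ Finset.univ.erase i, Function.update c i (c i + s) j • vecMulVec (v j) (v j)
      = ∑ j ∈ Finset.univ.erase i, c j • vecMulVec (v j) (v j) :=
    Finset.sum_congr rfl fun j hj => by rw [Function.update_of_ne (Finset.ne_of_mem_erase hj)]
  rw [h2, add_smul]
  abel

set_option maxHeartbeats 1000000 in
lemma iterate {m : ℕ} (hn : 0 < n) (v : Fin m → Fin n → ℝ)
    (hv : ∑ i, vecMulVec (v i) (v i) = 1)
    {δU δL εU εL : ℝ}
    (hδU : 0 < δU) (hδL : 0 < δL) (hεL : 0 < εL) (hεU : 0 < εU)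
    (hεδ : δL * εL < 1)
    (hbal : 1/δU + εU ≤ 1/δL - εL)
    (k : ℕ) :
    ∃ c : Fin m → ℝ, (∀ i, 0 ≤ c i) ∧
      (Finset.univ.filter (fun i => c i ≠ 0)).card ≤ k ∧
      (((n/εU + k * δU) • 1 - wsum v c).PosDef) ∧
      ((wsum v c - (-(n/εL) + k * δL) • 1).PosDef) ∧
      (((n/εU + k * δU) • 1 - wsum v c)⁻¹.trace ≤ εU) ∧
      ((wsum v c - (-(n/εL) + k * δL) • 1)⁻¹.trace ≤ εL) := by
  have hnR : (0:ℝ) < n := Nat.cast_pos.mpr hn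
  induction k with
  | zero =>
    refine ⟨0, fun i => le_refl 0, ?_, ?_, ?_, ?_, ?_⟩
    · simp
    · have hz : wsum v (0 : Fin m → ℝ) = 0 := by simp [wsum]
      rw [hz, sub_zero]
      push_cast
      rw [zero_mul, add_zero]
      exact smul_one_posDef (div_pos hnR hεU)
    · have hz : wsum v (0 : Fin m → ℝ) = 0 := by simp [wsum]
      rw [hz, zero_sub]
      push_cast
      rw [zero_mul, add_zero, ← neg_smul, neg_neg]
      exact smul_one_posDef (div_pos hnR hεL)
    · have hz : wsum v (0 : Fin m → ℝ) = 0 := by simp [wsum]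
      rw [hz, sub_zero]
      push_cast
      rw [zero_mul, add_zero]
      have hu : (0:ℝ) < n/εU := div_pos hnR hεU
      have hinv : ((n/εU) • (1 : Mat n))⁻¹ = (n/εU)⁻¹ • (1 : Mat n) := by
        apply inv_eq_right_inv
        rw [smul_mul_smul_comm, mul_one, mul_inv_cancel₀ (ne_of_gt hu), one_smul]
      rw [hinv, trace_smul, trace_one]
      simp only [smul_eq_mul]
      rw [Fintype.card_fin]
      rw [inv_div, div_mul_eq_mul_div, mul_comm]
      have heq : (n:ℝ) * εU / n = εU := by
        field_simp
      rw [heq]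
    · have hz : wsum v (0 : Fin m → ℝ) = 0 := by simp [wsum]
      rw [hz, zero_sub]
      push_cast
      rw [zero_mul, add_zero, ← neg_smul, neg_neg]
      have hu : (0:ℝ) < n/εL := div_pos hnR hεL
      have hinv : ((n/εL) • (1 : Mat n))⁻¹ = (n/εL)⁻¹ • (1 : Mat n) := by
        apply inv_eq_right_inv
        rw [smul_mul_smul_comm, mul_one, mul_inv_cancel₀ (ne_of_gt hu), one_smul]
      rw [hinv, trace_smul, trace_one]
      simp only [smul_eq_mul]
      rw [Fintype.card_fin]
      rw [inv_div, div_mul_eq_mul_div, mul_comm]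
      have heq : (n:ℝ) * εL / n = εL := by
        field_simp
      rw [heq]
  | succ k ih =>
    obtain ⟨c, hc0, hcard, hPDU, hPDL, hTU, hTL⟩ := ih
    obtain ⟨i, s, hs0, hPDU', hPDL', hTU', hTL'⟩ :=
      step hn v hv hδU hδL hεL hεδ hbal hPDU hPDL hTU hTL
    refine ⟨Function.update c i (c i + s), ?_, ?_, ?_, ?_, ?_, ?_⟩
    · intro j
      by_cases h : j = i
      · subst h; rw [Function.update_self]; exact add_nonneg (hc0 j) hs0
      · rw [Function.update_of_ne h]; exact hc0 j
    · have hsub : Finset.univ.filter (fun j => Function.update c i (c i + s) j ≠ 0)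
          ⊆ insert i (Finset.univ.filter (fun j => c j ≠ 0)) := by
        intro j hj
        rw [Finset.mem_filter] at hj
        by_cases h : j = i
        · exact Finset.mem_insert.mpr (Or.inl h)
        · refine Finset.mem_insert.mpr (Or.inr ?_)
          rw [Finset.mem_filter]
          rw [Function.update_of_ne h] at hj
          exact ⟨Finset.mem_univ _, hj.2⟩
      calc (Finset.univ.filter (fun j => Function.update c i (c i + s) j ≠ 0)).card
          ≤ (insert i (Finset.univ.filter (fun j => c j ≠ 0))).card :=
            Finset.card_le_card hsub
        _ ≤ (Finset.univ.filter (fun j => c j ≠ 0)).card + 1 := Finset.card_insert_le _ _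
        _ ≤ k + 1 := by omega
    all_goals {
      rw [wsum_update]
      have harith : (n/εU + (k+1 : ℕ) * δU : ℝ) = (n/εU + k * δU) + δU := by
        push_cast; ring
      have harith2 : (-(n/εL) + (k+1 : ℕ) * δL : ℝ) = (-(n/εL) + k * δL) + δL := by
        push_cast; ring
      first
      | (rw [harith]; exact hPDU')
      | (rw [harith2]; exact hPDL')
      | (rw [harith]; exact hTU')
      | (rw [harith2]; exact hTL')
    }

set_option maxHeartbeats 1000000 in
/-- BSS sparsification in isotropic position -/
lemma bss {m : ℕ} (hn : 0 < n) (v : Fin m → Fin n → ℝ)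
    (hv : ∑ i, vecMulVec (v i) (v i) = 1)
    {γ : ℝ} (hγ₀ : 0 < γ) (hγ₁ : γ < 1) :
    ∃ c : Fin m → ℝ, (∀ i, 0 ≤ c i) ∧
      (Finset.univ.filter (fun i => c i ≠ 0)).card ≤ ⌈(n:ℝ)/γ^2⌉₊ ∧
      ∀ x : Fin n → ℝ,
        (1-γ)^2 * (x ⬝ᵥ x) ≤ ∑ i, c i * (v i ⬝ᵥ x)^2 ∧
        ∑ i, c i * (v i ⬝ᵥ x)^2 ≤ (1+γ)^2 * (x ⬝ᵥ x) := by
  have hnR : (0:ℝ) < n := Nat.cast_pos.mpr hn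
  have hnR1 : (1:ℝ) ≤ n := by exact_mod_cast hn
  have h1γ : (0:ℝ) < 1 - γ := by linarith
  have h1γ' : (0:ℝ) < 1 + γ := by linarith
  have hδU : (0:ℝ) < (1+γ)/(1-γ) := div_pos h1γ' h1γ
  have hεU : (0:ℝ) < γ*(1-γ)/(1+γ) := div_pos (mul_pos hγ₀ h1γ) h1γ'
  have hbal : 1/((1+γ)/(1-γ)) + γ*(1-γ)/(1+γ) ≤ 1/(1:ℝ) - γ := by
    rw [one_div_div]
    rw [← add_div, div_le_iff₀ h1γ']
    ring_nf
    nlinarith [sq_nonneg γ]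
  obtain ⟨c, hc0, hcard, hPDU, hPDL, _, _⟩ :=
    iterate hn v hv hδU one_pos hγ₀ hεU
      (show (1:ℝ) * γ < 1 by rw [one_mul]; exact hγ₁) hbal ⌈(n:ℝ)/γ^2⌉₊
  set q : ℕ := ⌈(n:ℝ)/γ^2⌉₊ with hqdef
  set uq : ℝ := n/(γ*(1-γ)/(1+γ)) + q * ((1+γ)/(1-γ)) with huqdef
  set lq : ℝ := -(n/γ) + q * 1 with hlqdef
  have hq : (n:ℝ)/γ^2 ≤ q := Nat.le_ceil _
  have hγ2 : (0:ℝ) < γ^2 := by positivity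
  have hq' : (n:ℝ) ≤ q * γ^2 := by rwa [div_le_iff₀ hγ2] at hq
  have hqpos : (0:ℝ) < q := by nlinarith [hq', hγ2]
  have hlq : 0 < lq := by
    rw [hlqdef]
    have hdiv : (n:ℝ)/γ < q := by
      rw [div_lt_iff₀ hγ₀]
      nlinarith [hq', hqpos]
    linarith
  have huqA : (n:ℝ)/(γ*(1-γ)/(1+γ)) = n*(1+γ)/(γ*(1-γ)) := by
    rw [div_div_eq_mul_div]
  have hratio : (1-γ)^2 * uq ≤ (1+γ)^2 * lq := by
    rw [huqdef, hlqdef, huqA]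
    rw [← sub_nonneg]
    have hexp : (1+γ)^2 * (-(↑n/γ) + ↑q * 1) - (1-γ)^2 * (↑n*(1+γ)/(γ*(1-γ)) + ↑q * ((1+γ)/(1-γ)))
        = (1+γ) * (2*γ*q - 2*(n/γ)) := by
      field_simp
      ring
    rw [hexp]
    have h2 : (n:ℝ)/γ ≤ γ*q := by
      rw [div_le_iff₀ hγ₀]
      nlinarith [hq']
    nlinarith [h1γ', h2]
  set κ : ℝ := (1-γ)^2 / lq with hκdef
  have hκpos : 0 < κ := div_pos (by positivity) hlq
  refine ⟨fun i => κ * c i, fun i => mul_nonneg hκpos.le (hc0 i), ?_, ?_⟩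
  · apply le_trans (Finset.card_le_card ?_) hcard
    intro j hj
    rw [Finset.mem_filter] at hj ⊢
    refine ⟨Finset.mem_univ _, fun h => hj.2 ?_⟩
    simp [h]
  · intro x
    have hxx : 0 ≤ x ⬝ᵥ x := dot_self_nonneg x
    have hSx : ∑ i, (κ * c i) * (v i ⬝ᵥ x)^2 = κ * qf (wsum v c) x := by
      rw [qf_wsum, Finset.mul_sum]
      exact Finset.sum_congr rfl fun i _ => by ring
    have hub : qf (wsum v c) x ≤ uq * (x ⬝ᵥ x) := by
      have h0 := qf_nonneg hPDU.posSemidef x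
      rw [qf_sub, qf_smul, qf_one] at h0
      linarith
    have hlb : lq * (x ⬝ᵥ x) ≤ qf (wsum v c) x := by
      have h0 := qf_nonneg hPDL.posSemidef x
      rw [qf_sub, qf_smul, qf_one] at h0
      linarith
    have hκlq : κ * lq = (1-γ)^2 := div_mul_cancel₀ _ (ne_of_gt hlq)
    have hκuq : κ * uq ≤ (1+γ)^2 := by
      rw [hκdef, div_mul_eq_mul_div, div_le_iff₀ hlq]
      calc (1-γ)^2 * uq ≤ (1+γ)^2 * lq := hratio
      _ = (1+γ)^2 * lq := rfl
    constructor
    · rw [hSx]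
      calc (1-γ)^2 * (x ⬝ᵥ x) = κ * lq * (x ⬝ᵥ x) := by rw [hκlq]
      _ = κ * (lq * (x ⬝ᵥ x)) := by ring
      _ ≤ κ * qf (wsum v c) x := mul_le_mul_of_nonneg_left hlb hκpos.le
    · rw [hSx]
      calc κ * qf (wsum v c) x ≤ κ * (uq * (x ⬝ᵥ x)) :=
            mul_le_mul_of_nonneg_left hub hκpos.le
      _ = (κ * uq) * (x ⬝ᵥ x) := by ring
      _ ≤ (1+γ)^2 * (x ⬝ᵥ x) := mul_le_mul_of_nonneg_right hκuq hxx

lemma qf_sum_mats {ι : Type*} (s : Finset ι) (N : ι → Mat n) (x : Fin n → ℝ) :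
    qf (∑ i ∈ s, N i) x = ∑ i ∈ s, qf (N i) x := by
  simp only [qf_eq_trace, Finset.sum_mul, trace_sum]

lemma vecMulVec_mulVec_conj (X : Mat n) (a : Fin n → ℝ) :
    vecMulVec (X *ᵥ a) (X *ᵥ a) = X * vecMulVec a a * Xᵀ := by
  ext j j'
  simp only [vecMulVec_apply, mul_apply, mulVec, dotProduct, transpose_apply]
  rw [Finset.sum_mul_sum, Finset.sum_comm]
  refine Finset.sum_congr rfl fun k _ => ?_
  rw [Finset.sum_mul]
  exact Finset.sum_congr rfl fun l _ => by ring

set_option maxHeartbeats 1000000 in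
/-- BSS sparsification for general matrices, quadratic-form version -/
theorem main {m t : ℕ} (A : Matrix (Fin m) (Fin t) ℝ) {γ : ℝ} (hγ₀ : 0 < γ) (hγ₁ : γ < 1) :
    ∃ w : Fin m → ℝ, (∀ i, 0 ≤ w i) ∧
      (Finset.univ.filter (fun i => w i ≠ 0)).card ≤ ⌈(t:ℝ)/γ^2⌉₊ ∧
      ∀ v : Fin t → ℝ,
        (1-γ)^2 * (∑ i, (A i ⬝ᵥ v)^2) ≤ ∑ i, w i * (A i ⬝ᵥ v)^2 ∧
        ∑ i, w i * (A i ⬝ᵥ v)^2 ≤ (1+γ)^2 * (∑ i, (A i ⬝ᵥ v)^2) := by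
  rcases Nat.eq_zero_or_pos t with ht0 | ht
  · subst ht0
    refine ⟨0, fun i => le_refl 0, by simp, fun v => ?_⟩
    have hz : ∀ i, A i ⬝ᵥ v = 0 := fun i => by
      simp [dotProduct]
    simp [hz]
  · classical
    set M : Mat t := Aᵀ * A with hMdef
    have hM : M.PosSemidef := by
      have := posSemidef_conjTranspose_mul_self A
      rwa [conjTranspose_eq_transpose_of_trivial] at this
    have hH : M.IsHermitian := hM.isHermitian
    set V : Mat t := (hH.eigenvectorUnitary : Mat t) with hVdef
    set lam : Fin t → ℝ := hH.eigenvalues with hlamdef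
    have hlam0 : ∀ k, 0 ≤ lam k := hM.eigenvalues_nonneg
    have hVV : Vᵀ * V = 1 := by
      have := (Matrix.mem_unitaryGroup_iff').mp (hH.eigenvectorUnitary).2
      rwa [star_eq_conjTranspose, conjTranspose_eq_transpose_of_trivial] at this
    have hVV' : V * Vᵀ = 1 := by
      have := (Matrix.mem_unitaryGroup_iff).mp (hH.eigenvectorUnitary).2
      rwa [star_eq_conjTranspose, conjTranspose_eq_transpose_of_trivial] at this
    set Dg : (Fin t → ℝ) → Mat t := fun gg => V * diagonal gg * Vᵀ with hDgdef
    have hspec : M = Dg lam := by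
      have h := hH.spectral_theorem
      rw [Unitary.conjStarAlgAut_apply, star_eq_conjTranspose, conjTranspose_eq_transpose_of_trivial] at h
      rw [hDgdef]
      convert h using 3
      funext k; simp [hlamdef]
    have hDgmul : ∀ g1 g2, Dg g1 * Dg g2 = Dg (fun k => g1 k * g2 k) := by
      intro g1 g2
      show V * diagonal g1 * Vᵀ * (V * diagonal g2 * Vᵀ) = V * diagonal _ * Vᵀ
      simp only [Matrix.mul_assoc]
      rw [← Matrix.mul_assoc Vᵀ V, hVV, Matrix.one_mul,
        ← Matrix.mul_assoc (diagonal g1) (diagonal g2), diagonal_mul_diagonal]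
    have hDgT : ∀ gg, (Dg gg)ᵀ = Dg gg := by
      intro gg
      show (V * diagonal gg * Vᵀ)ᵀ = _
      rw [transpose_mul, transpose_mul, transpose_transpose, diagonal_transpose,
        ← Matrix.mul_assoc]
    have hDgadd : ∀ g1 g2, Dg g1 + Dg g2 = Dg (fun k => g1 k + g2 k) := by
      intro g1 g2
      show V * diagonal g1 * Vᵀ + V * diagonal g2 * Vᵀ = V * diagonal _ * Vᵀ
      rw [← Matrix.add_mul, ← Matrix.mul_add, diagonal_add]
    have hDgone : Dg (fun _ => 1) = 1 := by
      show V * diagonal (fun _ => 1) * Vᵀ = 1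
      rw [show (diagonal (fun _ : Fin t => (1:ℝ))) = 1 from diagonal_one, Matrix.mul_one, hVV']
    have hDgpsd : ∀ gg, (∀ k, 0 ≤ gg k) → (Dg gg).PosSemidef := by
      intro gg hgg
      have h1 : (diagonal gg).PosSemidef := PosSemidef.diagonal hgg
      have h2 := h1.mul_mul_conjTranspose_same V
      rwa [conjTranspose_eq_transpose_of_trivial] at h2
    -- diagonal functions
    set g : Fin t → ℝ := fun k => if lam k = 0 then 0 else (Real.sqrt (lam k))⁻¹ with hgdef
    set sl : Fin t → ℝ := fun k => Real.sqrt (lam k) with hsldef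
    set ind : Fin t → ℝ := fun k => if lam k = 0 then 0 else 1 with hinddef
    set ker : Fin t → ℝ := fun k => if lam k = 0 then 1 else 0 with hkerdef
    have hslne : ∀ k, lam k ≠ 0 → Real.sqrt (lam k) ≠ 0 := by
      intro k hk
      exact Real.sqrt_ne_zero'.mpr (lt_of_le_of_ne (hlam0 k) (Ne.symm hk))
    have hsl2 : ∀ k, sl k * sl k = lam k := fun k => Real.mul_self_sqrt (hlam0 k)
    have hgsl : ∀ k, g k * sl k = ind k := by
      intro k
      by_cases hk : lam k = 0
      · simp [hgdef, hinddef, hk]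
      · simp only [hgdef, hinddef, hsldef, if_neg hk]
        exact inv_mul_cancel₀ (hslne k hk)
    have hglg : ∀ k, g k * lam k * g k = ind k := by
      intro k
      by_cases hk : lam k = 0
      · simp [hgdef, hinddef, hk]
      · simp only [hgdef, hinddef, if_neg hk]
        rw [← hsl2 k]
        simp only [hsldef]
        field_simp [hslne k hk]
        rw [Real.sqrt_sq (Real.sqrt_nonneg _)]
    have hkersl : ∀ k, ker k * sl k = 0 := by
      intro k
      by_cases hk : lam k = 0
      · simp [hkerdef, hsldef, hk]
      · simp [hkerdef, hk]
    have hkerlam : ∀ k, ker k * lam k = 0 := by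
      intro k
      by_cases hk : lam k = 0 <;> simp [hkerdef, hk]
    have hindker : ∀ k, ind k + ker k = 1 := by
      intro k
      by_cases hk : lam k = 0 <;> simp [hinddef, hkerdef, hk]
    -- rows
    have hsumA : ∑ i, vecMulVec (A i) (A i) = M := by
      ext j k
      simp only [Matrix.sum_apply, vecMulVec_apply, hMdef, mul_apply, transpose_apply]
    set b : Fin m → Fin t → ℝ := fun i => Dg g *ᵥ (A i) with hbdef
    set d : Fin t → Fin t → ℝ := fun k => fun j => ker k * V j k with hddef
    have hsumb : ∑ i, vecMulVec (b i) (b i) = Dg ind := by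
      have h1 : ∀ i : Fin m, vecMulVec (b i) (b i) = Dg g * vecMulVec (A i) (A i) * (Dg g)ᵀ :=
        fun i => vecMulVec_mulVec_conj (Dg g) (A i)
      rw [Finset.sum_congr rfl fun i _ => h1 i, ← Finset.sum_mul, ← Finset.mul_sum, hsumA,
        hDgT, hspec, hDgmul, hDgmul]
      have heq : (fun k => g k * lam k * g k) = ind := funext hglg
      rw [heq]
    have hDgapply : ∀ (gg : Fin t → ℝ) (j j' : Fin t),
        Dg gg j j' = ∑ k, gg k * (V j k * V j' k) := by
      intro gg j j'
      show (V * diagonal gg * Vᵀ) j j' = _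
      rw [mul_apply]
      refine Finset.sum_congr rfl fun k _ => ?_
      rw [mul_diagonal, transpose_apply]
      ring
    have hsumd : ∑ k, vecMulVec (d k) (d k) = Dg ker := by
      ext j j'
      rw [Matrix.sum_apply, hDgapply]
      refine Finset.sum_congr rfl fun k _ => ?_
      simp only [vecMulVec_apply, hddef]
      by_cases hk : lam k = 0
      · simp only [hkerdef, if_pos hk]; ring
      · simp only [hkerdef, if_neg hk]; ring
    set u : Fin (m + t) → Fin t → ℝ := Fin.append b d with hudef
    have husum : ∑ i, vecMulVec (u i) (u i) = 1 := by
      rw [Fin.sum_univ_add (f := fun i => vecMulVec (u i) (u i))]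
      simp only [hudef, Fin.append_left, Fin.append_right]
      rw [hsumb, hsumd, hDgadd, ← hDgone]
      have heq : (fun k => ind k + ker k) = fun _ => (1:ℝ) := funext hindker
      rw [heq]
    obtain ⟨c, hc0, hcard, hineq⟩ := bss ht u husum hγ₀ hγ₁
    refine ⟨fun i => c (Fin.castAdd t i), fun i => hc0 _, ?_, ?_⟩
    · refine le_trans ?_ hcard
      apply Finset.card_le_card_of_injOn (fun i => Fin.castAdd t i)
      · intro j hj
        simpa using hj
      · intro a _ b _ hab
        exact Fin.castAdd_injective m t hab
    · intro v
      set x : Fin t → ℝ := Dg sl *ᵥ v with hxdef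
      -- x ⬝ᵥ x = ∑ i, (A i ⬝ᵥ v)^2
      have hxx : x ⬝ᵥ x = ∑ i, (A i ⬝ᵥ v)^2 := by
        rw [hxdef, mulVec_dot, hDgT, mulVec_mulVec, hDgmul]
        have hMeq : Dg (fun k => sl k * sl k) = M := by
          have heq : (fun k => sl k * sl k) = lam := funext hsl2
          rw [hspec, heq]
        rw [hMeq]
        have h2 : v ⬝ᵥ (M *ᵥ v) = qf M v := rfl
        rw [h2, ← hsumA, qf_sum_mats]
        exact Finset.sum_congr rfl fun i _ => by
          rw [qf_vecMulVec, dotProduct_comm]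
      -- kernel annihilates rows
      have hkerA : ∀ i, Dg ker *ᵥ (A i) = 0 := by
        have hQpsd : (Dg ker).PosSemidef := hDgpsd ker (fun k => by
          by_cases hk : lam k = 0 <;> simp [hkerdef, hk])
        have hzero : ∑ i, qf (Dg ker) (A i) = 0 := by
          have h3 : ∀ i : Fin m, qf (Dg ker) (A i) = (Dg ker * vecMulVec (A i) (A i)).trace :=
            fun i => qf_eq_trace _ _
          rw [Finset.sum_congr rfl fun i _ => h3 i, ← trace_sum, ← Finset.mul_sum, hsumA,
            hspec, hDgmul]
          have h4 : (fun k => ker k * lam k) = fun _ => (0:ℝ) := funext hkerlam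
          rw [h4]
          have h5 : Dg (fun _ => (0:ℝ)) = 0 := by
            show V * diagonal (fun _ : Fin t => (0:ℝ)) * Vᵀ = 0
            rw [diagonal_zero, Matrix.mul_zero, Matrix.zero_mul]
          rw [h5, trace_zero]
        have hall : ∀ i ∈ Finset.univ, qf (Dg ker) (A i) = 0 := by
          rw [← Finset.sum_eq_zero_iff_of_nonneg (fun i _ => qf_nonneg hQpsd (A i))]
          exact hzero
        intro i
        have h5 := hall i (Finset.mem_univ i)
        have h6 := (hQpsd.dotProduct_mulVec_zero_iff (A i)).mp (by
          rw [star_trivial]; exact h5)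
        exact h6
      -- b i ⬝ᵥ x = A i ⬝ᵥ v
      have hbx : ∀ i, b i ⬝ᵥ x = A i ⬝ᵥ v := by
        intro i
        rw [hbdef, hxdef]
        rw [mulVec_dot, hDgT, mulVec_mulVec, hDgmul]
        have h7 : Dg (fun k => g k * sl k) = Dg ind := by
          have heq : (fun k => g k * sl k) = ind := funext hgsl
          rw [heq]
        rw [h7]
        have h8 : Dg ind = 1 - Dg ker := by
          rw [eq_sub_iff_add_eq, hDgadd, ← hDgone]
          have heq : (fun k => ind k + ker k) = fun _ => (1:ℝ) := funext hindker
          rw [heq]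
        rw [h8, sub_mulVec, one_mulVec, dotProduct_sub]
        have h9 : A i ⬝ᵥ (Dg ker *ᵥ v) = 0 := by
          have h10 := mulVec_dot (Dg ker) (A i) v
          rw [hDgT] at h10
          rw [← h10, hkerA i, zero_dotProduct]
        rw [h9, sub_zero]
      -- d k ⬝ᵥ x = 0
      have hdx : ∀ k, d k ⬝ᵥ x = 0 := by
        intro k
        have h11 : d k ⬝ᵥ x = ker k * ((Vᵀ *ᵥ x) k) := by
          simp only [hddef, dotProduct, mulVec, transpose_apply, Finset.mul_sum]
          exact Finset.sum_congr rfl fun j _ => by ring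
        rw [h11, hxdef]
        have h12 : Vᵀ *ᵥ (Dg sl *ᵥ v) = diagonal sl *ᵥ (Vᵀ *ᵥ v) := by
          rw [mulVec_mulVec, mulVec_mulVec, hDgdef]
          congr 1
          rw [← Matrix.mul_assoc, ← Matrix.mul_assoc, hVV, Matrix.one_mul]
        rw [h12, mulVec_diagonal]
        rw [← mul_assoc, hkersl k, zero_mul]
      -- final
      obtain ⟨hlow, hhigh⟩ := hineq x
      have hsplit : ∑ i : Fin (m+t), c i * (u i ⬝ᵥ x)^2
          = ∑ i : Fin m, c (Fin.castAdd t i) * (A i ⬝ᵥ v)^2 := by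
        rw [Fin.sum_univ_add (f := fun i => c i * (u i ⬝ᵥ x)^2)]
        simp only [hudef, Fin.append_left, Fin.append_right]
        have hz2 : ∑ k : Fin t, c (Fin.natAdd m k) * (d k ⬝ᵥ x)^2 = 0 := by
          apply Finset.sum_eq_zero
          intro k _
          rw [hdx k]
          ring
        rw [hz2, add_zero]
        exact Finset.sum_congr rfl fun i _ => by rw [hbx i]
      rw [hsplit, hxx] at hlow hhigh
      exact ⟨hlow, hhigh⟩

end BSS

/-- `ℓ₂` subspace sparsification for an arbitrary matrix: for any `m × t` real matrix
`A` and `γ ∈ (0,1)` there exist nonnegative weights `w`, at most `⌈t/γ²⌉` of them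
nonzero, with `(1-γ)‖Av‖₂ ≤ (∑ i, w i ⟨a_i, v⟩²)^{1/2} ≤ (1+γ)‖Av‖₂` for all `v`. -/
theorem l2_sparsification_general (m t : ℕ)
    (A : Matrix (Fin m) (Fin t) ℝ) (γ : ℝ) (hγ₀ : 0 < γ) (hγ₁ : γ < 1) :
    ∃ w : Fin m → ℝ,
      (∀ i, 0 ≤ w i) ∧
      (Finset.univ.filter (fun i => w i ≠ 0)).card ≤ ⌈(t : ℝ) / γ ^ 2⌉₊ ∧
      (∀ v : Fin t → ℝ,
        (1 - γ) * Real.sqrt (∑ i, (∑ j, A i j * v j) ^ 2) ≤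
            Real.sqrt (∑ i, w i * (∑ j, A i j * v j) ^ 2) ∧
          Real.sqrt (∑ i, w i * (∑ j, A i j * v j) ^ 2) ≤
            (1 + γ) * Real.sqrt (∑ i, (∑ j, A i j * v j) ^ 2)) := by
  obtain ⟨w, hw0, hcard, hineq⟩ := BSS.main A hγ₀ hγ₁
  refine ⟨w, hw0, hcard, fun v => ?_⟩
  obtain ⟨hlo, hhi⟩ := hineq v
  have e1 : ∀ i, A i ⬝ᵥ v = ∑ j, A i j * v j := fun i => rfl
  simp only [e1] at hlo hhi
  have h1γ : (0:ℝ) ≤ 1 - γ := by linarith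
  have h1γ' : (0:ℝ) ≤ 1 + γ := by linarith
  constructor
  · have h1 : (1 - γ) * Real.sqrt (∑ i, (∑ j, A i j * v j) ^ 2)
        = Real.sqrt ((1 - γ)^2 * ∑ i, (∑ j, A i j * v j) ^ 2) := by
      rw [Real.sqrt_mul (sq_nonneg _), Real.sqrt_sq h1γ]
    rw [h1]
    exact Real.sqrt_le_sqrt hlo
  · have h2 : (1 + γ) * Real.sqrt (∑ i, (∑ j, A i j * v j) ^ 2)
        = Real.sqrt ((1 + γ)^2 * ∑ i, (∑ j, A i j * v j) ^ 2) := by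
      rw [Real.sqrt_mul (sq_nonneg _), Real.sqrt_sq h1γ']
    rw [h2]
    exact Real.sqrt_le_sqrt hhi
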